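/- Every submodular hypergraph G = (V, E, w, μ) can be reduced to a submodular hypergraph G′ = (V, E′, w′, μ) on the same vertex set with the same vertex weights such that vol_{G′}(∂S) = vol_G(∂S) for every S ⊆ V, and such that for every hyperedge e ∈ E′ and all u, v ∈ e, the vertices u and v are connected in G′. (Equivalently, in G′ every hyperedge weight satisfies w′_e(S) > 0 for all S with ∅ ≠ S ∩ e ⊊ e.) -/

import Mathlib

open scoped BigOperators
open Finset

noncomputable section

/-- A set function on the ground set `Fin N` is submodular:
`F(S ∪ T) + F(S ∩ T) ≤ F(S) + F(T)` for all `S, T`. -/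
def Submodular {N : ℕ} (F : Finset (Fin N) → ℝ) : Prop :=
  ∀ S T : Finset (Fin N), F (S ∪ T) + F (S ∩ T) ≤ F S + F T

/-- The Lovász extension of a set function, written in its (tie-breaking independent)
level-set integral form, which agrees with the usual sorted-sum definition
`f(x) = Σ_{j=1}^{N-1} F({i_1,…,i_j})(x_{i_j} − x_{i_{j+1}})` for a nonincreasing
ordering `x_{i_1} ≥ … ≥ x_{i_N}`. -/
def lovasz {N : ℕ} (F : Finset (Fin N) → ℝ) (x : Fin N → ℝ) : ℝ :=
  ∫ t in (⨅ v, x v)..(⨆ v, x v), F (Finset.univ.filter fun v => t < x v)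

/-- The inner product `⟨y, x⟩ = Σ_v y_v x_v`. -/
def dotp {N : ℕ} (y x : Fin N → ℝ) : ℝ := ∑ v, y v * x v

/-- The set of subgradients of `f : ℝ^N → ℝ` at `x`. -/
def subgradients {N : ℕ} (f : (Fin N → ℝ) → ℝ) (x : Fin N → ℝ) : Set (Fin N → ℝ) :=
  {y | ∀ x', dotp y (x' - x) ≤ f x' - f x}

/-- The base polytope of a set function: `y(S) ≤ F(S)` for all `S ⊆ V` and `y(V) = 0`. -/
def basePolytope {N : ℕ} (F : Finset (Fin N) → ℝ) : Set (Fin N → ℝ) :=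
  {y | (∀ S : Finset (Fin N), ∑ v ∈ S, y v ≤ F S) ∧ ∑ v, y v = 0}

/-- The sign function (`sgn 0 = 0`). -/
def sgn (a : ℝ) : ℝ := if 0 < a then 1 else if a < 0 then -1 else 0

/-- A vector is nonconstant. -/
def Nonconstant {N : ℕ} (x : Fin N → ℝ) : Prop := ∃ u v, x u ≠ x v

/-- Restriction of a vector to a subset of vertices (zero outside that subset). -/
def restrictVec {N : ℕ} (x : Fin N → ℝ) (C : Finset (Fin N)) : Fin N → ℝ :=
  fun v => if v ∈ C then x v else 0

/-- Euclidean norm on `ℝ^N`. -/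
def l2norm {N : ℕ} (z : Fin N → ℝ) : ℝ := Real.sqrt (∑ v, z v ^ 2)

/-- Supremum norm on `ℝ^N`. -/
def linfNorm {N : ℕ} (z : Fin N → ℝ) : ℝ := ⨆ v, |z v|

/-- A submodular hypergraph `G = (V, E, w, μ)` on `V = Fin N`: hyperedges `E`,
positive vertex weights `μ`, and for each hyperedge `e ∈ E` a scalar `θ_e > 0`
together with a normalized symmetric submodular weight `w_e : 2^e → [0,1]`
(extended to all of `2^V` by `w_e(S) = w_e(S ∩ e)`). -/
structure SubmodularHypergraph (N : ℕ) where
  E : Finset (Finset (Fin N))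
  μ : Fin N → ℝ
  μ_pos : ∀ v, 0 < μ v
  θ : Finset (Fin N) → ℝ
  θ_pos : ∀ e ∈ E, 0 < θ e
  w : Finset (Fin N) → Finset (Fin N) → ℝ
  w_inter : ∀ e ∈ E, ∀ S, w e S = w e (S ∩ e)
  w_submodular : ∀ e ∈ E, Submodular (w e)
  w_nonneg : ∀ e ∈ E, ∀ S, 0 ≤ w e S
  w_le_one : ∀ e ∈ E, ∀ S, w e S ≤ 1
  w_empty : ∀ e ∈ E, w e ∅ = 0
  w_normalized : ∀ e ∈ E, ∃ S ⊆ e, w e S = 1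
  w_symm : ∀ e ∈ E, ∀ S ⊆ e, w e S = w e (e \ S)

namespace SubmodularHypergraph

variable {N : ℕ} (G : SubmodularHypergraph N)

/-- `vol(S) = Σ_{v ∈ S} μ_v`. -/
def vol (S : Finset (Fin N)) : ℝ := ∑ v ∈ S, G.μ v

/-- `vol(∂S) = Σ_{e ∈ E} θ_e w_e(S)`. -/
def volB (S : Finset (Fin N)) : ℝ := ∑ e ∈ G.E, G.θ e * G.w e S

/-- The Lovász extension `f_e` of the hyperedge weight `w_e`. -/
def fe (e : Finset (Fin N)) (x : Fin N → ℝ) : ℝ := lovasz (G.w e) x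

/-- `Q_p(x) = Σ_{e ∈ E} θ_e f_e(x)^p`. -/
def Q (p : ℝ) (x : Fin N → ℝ) : ℝ := ∑ e ∈ G.E, G.θ e * G.fe e x ^ p

/-- `‖x‖_{ℓp,μ}^p = Σ_v μ_v |x_v|^p`. -/
def normLpPow (p : ℝ) (x : Fin N → ℝ) : ℝ := ∑ v, G.μ v * |x v| ^ p

/-- `G` is connected: `vol(∂S) > 0` for all nonempty proper `S ⊂ V`. -/
def Connected : Prop :=
  ∀ S : Finset (Fin N), S.Nonempty → S ≠ Finset.univ → 0 < G.volB S

/-- Vertices `u, v` are connected in `G`: every `S` with `u ∈ S`, `v ∉ S` has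
`vol(∂S) > 0`. -/
def VertConnected (u v : Fin N) : Prop :=
  ∀ S : Finset (Fin N), u ∈ S → v ∉ S → 0 < G.volB S

/-- The conductance `c(S) = vol(∂S) / min{vol(S), vol(V∖S)}`. -/
def conductance (S : Finset (Fin N)) : ℝ := G.volB S / min (G.vol S) (G.vol Sᶜ)

/-- The degree `d_v = Σ_{e ∈ E : v ∈ e} θ_e`. -/
def degree (v : Fin N) : ℝ := ∑ e ∈ G.E.filter (fun e => v ∈ e), G.θ e

/-- `τ = max_v d_v / μ_v`. -/
def tau : ℝ := ⨆ v, G.degree v / G.μ v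

/-- `G` is homogeneous: `w_e(S) = 1` for every `S ∈ 2^e ∖ {∅, e}`. -/
def Homogeneous : Prop :=
  ∀ e ∈ G.E, ∀ S ⊆ e, S ≠ ∅ → S ≠ e → G.w e S = 1

/-- `(λ, x)` is an eigenpair of the `p`-Laplacian `△_p` (for `p > 1` and for `p = 1`). -/
def IsEigenpair (p lam : ℝ) (x : Fin N → ℝ) : Prop :=
  x ≠ 0 ∧
  ∃ y : Finset (Fin N) → Fin N → ℝ,
    (∀ e ∈ G.E, y e ∈ basePolytope (G.w e) ∧
        ∀ z ∈ basePolytope (G.w e), dotp z x ≤ dotp (y e) x) ∧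
    (if 1 < p then
        ∀ v, ∑ e ∈ G.E, G.θ e * G.fe e x ^ (p - 1) * y e v
              = lam * G.μ v * (|x v| ^ (p - 1) * sgn (x v))
      else
        (∀ v, x v ≠ 0 → ∑ e ∈ G.E, G.θ e * y e v = lam * G.μ v * sgn (x v)) ∧
        (∀ v, x v = 0 → |∑ e ∈ G.E, G.θ e * y e v| ≤ lam * G.μ v))

/-- Vertices `u, v` are connected inside the induced sub-hypergraph `G[W]`
(the boundary volume in `G[W]` of `S ⊆ W` equals `Σ_{e ∈ E} θ_e w_e(S)`). -/
def VertConnectedIn (W : Finset (Fin N)) (u v : Fin N) : Prop :=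
  u = v ∨ ∀ S ⊆ W, u ∈ S → v ∉ S → 0 < G.volB S

/-- `C` is (the vertex set of) a connected component of the induced sub-hypergraph `G[W]`. -/
def IsComponent (W C : Finset (Fin N)) : Prop :=
  C ⊆ W ∧ C.Nonempty ∧
    (∀ u ∈ C, ∀ v ∈ C, G.VertConnectedIn W u v) ∧
    (∀ u ∈ C, ∀ v ∈ W, G.VertConnectedIn W u v → v ∈ C)

end SubmodularHypergraph

def posSupp {N : ℕ} (x : Fin N → ℝ) : Finset (Fin N) := Finset.univ.filter fun v => 0 < x v
def negSupp {N : ℕ} (x : Fin N → ℝ) : Finset (Fin N) := Finset.univ.filter fun v => x v < 0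
def nonnegSupp {N : ℕ} (x : Fin N → ℝ) : Finset (Fin N) := Finset.univ.filter fun v => 0 ≤ x v
def nonposSupp {N : ℕ} (x : Fin N → ℝ) : Finset (Fin N) := Finset.univ.filter fun v => x v ≤ 0

namespace SubmodularHypergraph

variable {N : ℕ} (G : SubmodularHypergraph N)

/-- The number of strong nodal domains of `x` (positive ones plus negative ones). -/
def strongNodalCount (x : Fin N → ℝ) : ℕ :=
  {C : Finset (Fin N) | G.IsComponent (posSupp x) C}.ncard +
  {C : Finset (Fin N) | G.IsComponent (negSupp x) C}.ncard

/-- The number of weak nodal domains of `x` (positive ones plus negative ones). -/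
def weakNodalCount (x : Fin N → ℝ) : ℕ :=
  {C : Finset (Fin N) | G.IsComponent (nonnegSupp x) C}.ncard +
  {C : Finset (Fin N) | G.IsComponent (nonposSupp x) C}.ncard

/-- The collection of strong nodal domains of `x`. -/
def strongNodalDomains (x : Fin N → ℝ) : Set (Finset (Fin N)) :=
  {C | G.IsComponent (posSupp x) C ∨ G.IsComponent (negSupp x) C}

/-- The collection of weak nodal domains of `x`. -/
def weakNodalDomains (x : Fin N → ℝ) : Set (Finset (Fin N)) :=
  {C | G.IsComponent (nonnegSupp x) C ∨ G.IsComponent (nonposSupp x) C}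

/-- `Z_{p,μ}(x) = min_c ‖x − c·𝟙‖_{ℓp,μ}^p`. -/
def Z (p : ℝ) (x : Fin N → ℝ) : ℝ := ⨅ c : ℝ, ∑ v, G.μ v * |x v - c| ^ p

/-- `𝓡_p(x) = Q_p(x) / Z_{p,μ}(x)`. -/
def Rq (p : ℝ) (x : Fin N → ℝ) : ℝ := G.Q p x / G.Z p x

/-- The `k`-way Cheeger constant `h_k`. -/
def cheegerConst (k : ℕ) : ℝ :=
  sInf {c : ℝ | ∃ S : Fin k → Finset (Fin N),
    (∀ i, (S i).Nonempty) ∧ (∀ i j, i ≠ j → Disjoint (S i) (S j)) ∧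
    c = ⨆ i, G.conductance (S i)}

end SubmodularHypergraph

/-- There is an odd continuous map `h : A → ℝ^k ∖ {0}`. -/
def genusLE {N : ℕ} (A : Set (Fin N → ℝ)) (k : ℕ) : Prop :=
  ∃ h : (Fin N → ℝ) → (Fin k → ℝ),
    ContinuousOn h A ∧ (∀ x ∈ A, h (-x) = -h x) ∧ ∀ x ∈ A, h x ≠ 0

/-- The Krasnoselski genus of a set. -/
def genus {N : ℕ} (A : Set (Fin N → ℝ)) : ℕ∞ :=
  sInf ((fun n : ℕ => (n : ℕ∞)) '' {n | genusLE A n})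

namespace SubmodularHypergraph

variable {N : ℕ} (G : SubmodularHypergraph N)

/-- The `k`-th variational eigenvalue `λ_k^{(p)}` of `△_p`:
`min` over closed symmetric `A ⊆ S_{p,μ}` with `γ(A) ≥ k` of `max_{x ∈ A} Q_p(x)`. -/
def varEigen (p : ℝ) (k : ℕ) : ℝ :=
  sInf ((fun A : Set (Fin N → ℝ) => sSup (G.Q p '' A)) ''
    {A | IsClosed A ∧ (∀ x ∈ A, -x ∈ A) ∧
         A ⊆ {x | G.normLpPow p x = 1} ∧ (k : ℕ∞) ≤ genus A})

end SubmodularHypergraph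
section StmtFourAux

open Finset

attribute [local instance] Classical.propDecidable

namespace StmtFour

variable {N : ℕ} (G : SubmodularHypergraph N)

lemma volB_nonneg (S : Finset (Fin N)) : 0 ≤ G.volB S :=
  Finset.sum_nonneg fun e he => mul_nonneg (G.θ_pos e he).le (G.w_nonneg e he S)

lemma w_compl {e : Finset (Fin N)} (he : e ∈ G.E) (S : Finset (Fin N)) :
    G.w e (Finset.univ \ S) = G.w e S := by
  rw [G.w_inter e he (Finset.univ \ S), G.w_inter e he S]
  have h1 : (Finset.univ \ S) ∩ e = e \ (S ∩ e) := by
    ext x; simp only [Finset.mem_inter, Finset.mem_union, Finset.mem_sdiff, Finset.mem_univ,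
      Finset.notMem_empty, true_and, and_true]
    tauto
  rw [h1, ← G.w_symm e he (S ∩ e) Finset.inter_subset_right]

lemma w_univ {e : Finset (Fin N)} (he : e ∈ G.E) : G.w e Finset.univ = 0 := by
  have := w_compl G he ∅
  simpa [G.w_empty e he, eq_comm] using this

lemma volB_empty : G.volB ∅ = 0 := by
  unfold SubmodularHypergraph.volB
  exact Finset.sum_eq_zero fun e he => by rw [G.w_empty e he, mul_zero]

lemma volB_univ : G.volB Finset.univ = 0 := by
  unfold SubmodularHypergraph.volB
  exact Finset.sum_eq_zero fun e he => by rw [w_univ G he, mul_zero]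

lemma volB_compl (S : Finset (Fin N)) : G.volB (Finset.univ \ S) = G.volB S := by
  unfold SubmodularHypergraph.volB
  exact Finset.sum_congr rfl fun e he => by rw [w_compl G he]

lemma volB_submod (A B : Finset (Fin N)) :
    G.volB (A ∪ B) + G.volB (A ∩ B) ≤ G.volB A + G.volB B := by
  unfold SubmodularHypergraph.volB
  rw [← Finset.sum_add_distrib, ← Finset.sum_add_distrib]
  refine Finset.sum_le_sum fun e he => ?_
  have h := G.w_submodular e he A B
  have hθ := (G.θ_pos e he).le
  nlinarith

lemma volB_inter_zero {A B : Finset (Fin N)} (hA : G.volB A = 0) (hB : G.volB B = 0) :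
    G.volB (A ∩ B) = 0 := by
  have h := volB_submod G A B
  have h1 := volB_nonneg G (A ∪ B)
  have h2 := volB_nonneg G (A ∩ B)
  linarith

lemma volB_inf_zero (D : Finset (Fin N)) (S : Fin N → Finset (Fin N))
    (h : ∀ v ∈ D, G.volB (S v) = 0) : G.volB (D.inf S) = 0 := by
  induction D using Finset.induction_on with
  | empty => simpa [Finset.top_eq_univ] using volB_univ G
  | @insert a D ha ih =>
      rw [Finset.inf_insert]
      have h1 : G.volB (S a) = 0 := h a (Finset.mem_insert_self a D)
      have h2 : G.volB (D.inf S) = 0 := ih fun v hv => h v (Finset.mem_insert_of_mem hv)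
      simpa [Finset.inf_eq_inter] using volB_inter_zero G h1 h2

lemma mem_finset_inf {D : Finset (Fin N)} {S : Fin N → Finset (Fin N)} {x : Fin N} :
    x ∈ D.inf S ↔ ∀ v ∈ D, x ∈ S v := by
  induction D using Finset.induction_on with
  | empty => simp [Finset.top_eq_univ]
  | @insert a D ha ih =>
      simp only [Finset.inf_insert, Finset.inf_eq_inter, Finset.mem_inter, ih]
      constructor
      · rintro ⟨h1, h2⟩ v hv
        rcases Finset.mem_insert.1 hv with rfl | hv
        · exact h1
        · exact h2 v hv
      · intro h
        exact ⟨h a (Finset.mem_insert_self a D), fun v hv => h v (Finset.mem_insert_of_mem hv)⟩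

/-- `u` and `v` lie in a common connectivity component. -/
def rel (u v : Fin N) : Prop := u = v ∨ G.VertConnected u v

lemma rel_refl (u : Fin N) : rel G u u := Or.inl rfl

lemma vc_symm {u v : Fin N} (h : G.VertConnected u v) : G.VertConnected v u := by
  intro S hv hu
  have := h (Finset.univ \ S) (by simp [hu]) (by simp [hv])
  rwa [volB_compl] at this

lemma vc_trans {u v w : Fin N} (h1 : G.VertConnected u v) (h2 : G.VertConnected v w) :
    G.VertConnected u w := by
  intro S hu hw
  by_cases hv : v ∈ S
  · exact h2 S hv hw
  · exact h1 S hu hv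

lemma rel_symm {u v : Fin N} (h : rel G u v) : rel G v u := by
  rcases h with h | h
  · exact Or.inl h.symm
  · exact Or.inr (vc_symm G h)

lemma rel_trans {u v w : Fin N} (h1 : rel G u v) (h2 : rel G v w) : rel G u w := by
  rcases h1 with rfl | h1
  · exact h2
  · rcases h2 with rfl | h2
    · exact Or.inr h1
    · exact Or.inr (vc_trans G h1 h2)

/-- The connectivity component of `u`. -/
noncomputable def comp (u : Fin N) : Finset (Fin N) :=
  Finset.univ.filter (fun v => rel G u v)

lemma mem_comp {u v : Fin N} : v ∈ comp G u ↔ rel G u v := by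
  simp [comp]

lemma mem_comp_self (u : Fin N) : u ∈ comp G u := (mem_comp G).2 (rel_refl G u)

lemma comp_eq_of_rel {u v : Fin N} (h : rel G u v) : comp G u = comp G v := by
  ext x
  simp only [mem_comp]
  exact ⟨fun hx => rel_trans G (rel_symm G h) hx, fun hx => rel_trans G h hx⟩

/-- The set of all connectivity components. -/
noncomputable def comps : Finset (Finset (Fin N)) := Finset.univ.image (comp G)

lemma comps_disjoint {C₁ C₂ : Finset (Fin N)} (h1 : C₁ ∈ comps G) (h2 : C₂ ∈ comps G)
    (hne : C₁ ≠ C₂) : Disjoint C₁ C₂ := by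
  obtain ⟨u, -, rfl⟩ := Finset.mem_image.1 h1
  obtain ⟨v, -, rfl⟩ := Finset.mem_image.1 h2
  rw [Finset.disjoint_left]
  intro x hxu hxv
  exact hne (comp_eq_of_rel G (rel_trans G ((mem_comp G).1 hxu)
    (rel_symm G ((mem_comp G).1 hxv))))

lemma volB_comp (u : Fin N) : G.volB (comp G u) = 0 := by
  have hsep : ∀ v : Fin N, ¬ rel G u v →
      ∃ S : Finset (Fin N), u ∈ S ∧ v ∉ S ∧ G.volB S = 0 := by
    intro v hv
    have hne : u ≠ v := fun h => hv (Or.inl h)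
    have hvc : ¬ G.VertConnected u v := fun h => hv (Or.inr h)
    unfold SubmodularHypergraph.VertConnected at hvc
    push_neg at hvc
    obtain ⟨S, hu, hvS, hle⟩ := hvc
    exact ⟨S, hu, hvS, le_antisymm hle (volB_nonneg G S)⟩
  classical
  set D : Finset (Fin N) := Finset.univ.filter (fun v => ¬ rel G u v) with hD
  set Sv : Fin N → Finset (Fin N) := fun v =>
    if h : ¬ rel G u v then (hsep v h).choose else Finset.univ with hSv
  have hspec : ∀ v ∈ D, u ∈ Sv v ∧ v ∉ Sv v ∧ G.volB (Sv v) = 0 := by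
    intro v hv
    have hnr : ¬ rel G u v := (Finset.mem_filter.1 hv).2
    simp only [hSv, dif_pos hnr]
    exact (hsep v hnr).choose_spec
  have hzero : G.volB (D.inf Sv) = 0 :=
    volB_inf_zero G D Sv fun v hv => (hspec v hv).2.2
  have hce : comp G u = D.inf Sv := by
    ext x
    rw [mem_finset_inf, mem_comp]
    constructor
    · intro hx v hv
      obtain ⟨hus, hvs, hv0⟩ := hspec v hv
      by_contra hxs
      rcases hx with rfl | hx
      · exact hxs hus
      · exact absurd (hx (Sv v) hus hxs) (by rw [hv0]; exact lt_irrefl 0)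
    · intro hx
      by_contra hnr
      have hxD : x ∈ D := Finset.mem_filter.2 ⟨Finset.mem_univ x, hnr⟩
      exact (hspec x hxD).2.1 (hx x hxD)
  rw [hce]; exact hzero

lemma w_zero_of_volB_zero {e S : Finset (Fin N)} (he : e ∈ G.E) (h : G.volB S = 0) :
    G.w e S = 0 := by
  have := (Finset.sum_eq_zero_iff_of_nonneg fun f hf =>
    mul_nonneg (G.θ_pos f hf).le (G.w_nonneg f hf S)).1 h e he
  rcases mul_eq_zero.1 this with h0 | h0
  · exact absurd h0 (G.θ_pos e he).ne'
  · exact h0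

lemma w_split {e T : Finset (Fin N)} (he : e ∈ G.E) (hT : G.w e T = 0)
    (S : Finset (Fin N)) : G.w e S = G.w e (S ∩ T) + G.w e (S \ T) := by
  have hTc : G.w e (Finset.univ \ T) = 0 := by rw [w_compl G he]; exact hT
  have hle : G.w e S ≤ G.w e (S ∩ T) + G.w e (S \ T) := by
    have h := G.w_submodular e he (S ∩ T) (S \ T)
    have h1 : (S ∩ T) ∪ (S \ T) = S := by
      ext x
      simp only [Finset.mem_inter, Finset.mem_union, Finset.mem_sdiff, Finset.mem_univ,
        Finset.notMem_empty, true_and, and_true]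
      tauto
    have h2 : (S ∩ T) ∩ (S \ T) = ∅ := by
      ext x
      simp only [Finset.mem_inter, Finset.mem_union, Finset.mem_sdiff, Finset.mem_univ,
        Finset.notMem_empty, true_and, and_true]
      tauto
    rw [h1, h2, G.w_empty e he] at h
    linarith
  have hge : G.w e (S ∩ T) + G.w e (S \ T) ≤ G.w e S := by
    have h := G.w_submodular e he (S ∪ T) (Finset.univ \ T)
    have h1 : (S ∪ T) ∪ (Finset.univ \ T) = Finset.univ := by
      ext x
      simp only [Finset.mem_inter, Finset.mem_union, Finset.mem_sdiff, Finset.mem_univ,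
        Finset.notMem_empty, true_and, and_true]
      tauto
    have h2 : (S ∪ T) ∩ (Finset.univ \ T) = S \ T := by
      ext x
      simp only [Finset.mem_inter, Finset.mem_union, Finset.mem_sdiff, Finset.mem_univ,
        Finset.notMem_empty, true_and, and_true]
      tauto
    rw [h1, h2, hTc, w_univ G he] at h
    have h3 := G.w_submodular e he S T
    rw [hT] at h3
    linarith
  linarith

lemma w_sum_parts {e : Finset (Fin N)} (he : e ∈ G.E) :
    ∀ 𝒞 : Finset (Finset (Fin N)), (∀ C ∈ 𝒞, G.w e C = 0) →
      (∀ C₁ ∈ 𝒞, ∀ C₂ ∈ 𝒞, C₁ ≠ C₂ → Disjoint C₁ C₂) →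
      ∀ S : Finset (Fin N), S ⊆ 𝒞.sup id → G.w e S = ∑ C ∈ 𝒞, G.w e (S ∩ C) := by
  intro 𝒞
  induction 𝒞 using Finset.induction_on with
  | empty =>
      intro _ _ S hS
      simp only [Finset.sup_empty, Finset.le_eq_subset] at hS
      have : S = ∅ := Finset.subset_empty.1 (by simpa using hS)
      simp [this, G.w_empty e he]
  | @insert C 𝒞 hC ih =>
      intro hzero hdisj S hS
      have hC0 : G.w e C = 0 := hzero C (Finset.mem_insert_self C 𝒞)
      have hsplit := w_split G he hC0 S
      have hsub : S \ C ⊆ 𝒞.sup id := by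
        intro x hx
        have hx1 : x ∈ (insert C 𝒞).sup id := hS (Finset.mem_sdiff.1 hx).1
        rw [Finset.sup_insert] at hx1
        rcases Finset.mem_union.1 hx1 with hx2 | hx2
        · exact absurd hx2 (Finset.mem_sdiff.1 hx).2
        · exact hx2
      have hih := ih (fun C' hC' => hzero C' (Finset.mem_insert_of_mem hC'))
        (fun C₁ h₁ C₂ h₂ hne =>
          hdisj C₁ (Finset.mem_insert_of_mem h₁) C₂ (Finset.mem_insert_of_mem h₂) hne)
        (S \ C) hsub
      rw [Finset.sum_insert hC]
      rw [hsplit, hih]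
      congr 1
      refine Finset.sum_congr rfl fun C' hC' => ?_
      have hdCC : Disjoint C C' := hdisj C (Finset.mem_insert_self C 𝒞) C'
        (Finset.mem_insert_of_mem hC') (fun h => hC (h ▸ hC'))
      congr 1
      ext x
      simp only [Finset.mem_inter, Finset.mem_sdiff]
      constructor
      · rintro ⟨⟨hxS, -⟩, hxC'⟩; exact ⟨hxS, hxC'⟩
      · rintro ⟨hxS, hxC'⟩
        exact ⟨⟨hxS, fun hxC => Finset.disjoint_left.1 hdCC hxC hxC'⟩, hxC'⟩

lemma w_comps_sum {e : Finset (Fin N)} (he : e ∈ G.E) (S : Finset (Fin N)) :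
    G.w e S = ∑ C ∈ comps G, G.w e (S ∩ C) := by
  refine w_sum_parts G he (comps G) ?_ (fun C₁ h₁ C₂ h₂ hne => comps_disjoint G h₁ h₂ hne) S ?_
  · intro C hC
    obtain ⟨u, -, rfl⟩ := Finset.mem_image.1 hC
    exact w_zero_of_volB_zero G he (volB_comp G u)
  · intro x hx
    have : comp G x ∈ comps G := Finset.mem_image.2 ⟨x, Finset.mem_univ x, rfl⟩
    exact (Finset.le_sup (f := id) this) (mem_comp_self G x)

/-- The restriction of the total boundary weight to a component. -/
noncomputable def FC (C S : Finset (Fin N)) : ℝ := ∑ e ∈ G.E, G.θ e * G.w e (S ∩ C)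

/-- The normalizing constant for a component. -/
noncomputable def MC (C : Finset (Fin N)) : ℝ :=
  (Finset.univ : Finset (Finset (Fin N))).sup' ⟨∅, Finset.mem_univ ∅⟩ (FC G C)

lemma FC_nonneg (C S : Finset (Fin N)) : 0 ≤ FC G C S :=
  Finset.sum_nonneg fun e he => mul_nonneg (G.θ_pos e he).le (G.w_nonneg e he _)

lemma FC_empty (C : Finset (Fin N)) : FC G C ∅ = 0 := by
  unfold FC
  refine Finset.sum_eq_zero fun e he => ?_
  rw [Finset.empty_inter, G.w_empty e he, mul_zero]

lemma FC_inter (C S : Finset (Fin N)) : FC G C (S ∩ C) = FC G C S := by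
  unfold FC
  refine Finset.sum_congr rfl fun e he => ?_
  rw [Finset.inter_assoc, Finset.inter_self]

lemma FC_le_MC (C S : Finset (Fin N)) : FC G C S ≤ MC G C :=
  Finset.le_sup' (FC G C) (Finset.mem_univ S)

lemma MC_nonneg (C : Finset (Fin N)) : 0 ≤ MC G C := by
  have := FC_le_MC G C ∅
  rw [FC_empty] at this
  exact this

lemma FC_eq_zero_of_MC {C : Finset (Fin N)} (h : MC G C = 0) (S : Finset (Fin N)) :
    FC G C S = 0 :=
  le_antisymm (h ▸ FC_le_MC G C S) (FC_nonneg G C S)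

lemma exists_FC_eq_MC (C : Finset (Fin N)) : ∃ S : Finset (Fin N), FC G C S = MC G C := by
  obtain ⟨S, -, hS⟩ := Finset.exists_mem_eq_sup' ⟨∅, Finset.mem_univ ∅⟩ (FC G C)
  exact ⟨S, hS.symm⟩

lemma FC_submod (C A B : Finset (Fin N)) :
    FC G C (A ∪ B) + FC G C (A ∩ B) ≤ FC G C A + FC G C B := by
  unfold FC
  rw [← Finset.sum_add_distrib, ← Finset.sum_add_distrib]
  refine Finset.sum_le_sum fun e he => ?_
  have h := G.w_submodular e he (A ∩ C) (B ∩ C)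
  have h1 : (A ∩ C) ∪ (B ∩ C) = (A ∪ B) ∩ C := by
    ext x
    simp only [Finset.mem_inter, Finset.mem_union, Finset.mem_sdiff, Finset.mem_univ,
      Finset.notMem_empty, true_and, and_true]
    tauto
  have h2 : (A ∩ C) ∩ (B ∩ C) = (A ∩ B) ∩ C := by
    ext x
    simp only [Finset.mem_inter, Finset.mem_union, Finset.mem_sdiff, Finset.mem_univ,
      Finset.notMem_empty, true_and, and_true]
    tauto
  rw [h1, h2] at h
  have hθ := (G.θ_pos e he).le
  nlinarith

lemma FC_symm {C : Finset (Fin N)} (hC : C ∈ comps G) {S : Finset (Fin N)} (hS : S ⊆ C) :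
    FC G C S = FC G C (C \ S) := by
  obtain ⟨u, -, rfl⟩ := Finset.mem_image.1 hC
  unfold FC
  refine Finset.sum_congr rfl fun e he => ?_
  have hC0 : G.w e (comp G u) = 0 := w_zero_of_volB_zero G he (volB_comp G u)
  have hsplit := w_split G he hC0 (Finset.univ \ S)
  have h1 : (Finset.univ \ S) ∩ comp G u = comp G u \ S := by
    ext x
    simp only [Finset.mem_inter, Finset.mem_union, Finset.mem_sdiff, Finset.mem_univ,
      Finset.notMem_empty, true_and, and_true]
    tauto
  have h2 : (Finset.univ \ S) \ comp G u = Finset.univ \ comp G u := by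
    ext x
    simp only [Finset.mem_sdiff, Finset.mem_univ, true_and]
    constructor
    · rintro ⟨-, h⟩; exact h
    · intro h; exact ⟨fun hx => h (hS hx), h⟩
  rw [h1, h2, w_compl G he, w_compl G he, hC0] at hsplit
  have h3 : S ∩ comp G u = S := Finset.inter_eq_left.2 hS
  have h4 : (comp G u \ S) ∩ comp G u = comp G u \ S :=
    Finset.inter_eq_left.2 Finset.sdiff_subset
  rw [h3, h4, hsplit]
  ring

/-- The reduced hypergraph: hyperedges are the (non-degenerate) connectivity components. -/
noncomputable def reduced : SubmodularHypergraph N where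
  E := (comps G).filter (fun C => 0 < MC G C)
  μ := G.μ
  μ_pos := G.μ_pos
  θ := MC G
  θ_pos := fun C hC => (Finset.mem_filter.1 hC).2
  w := fun C S => FC G C S / MC G C
  w_inter := fun C hC S => by
    show FC G C S / MC G C = FC G C (S ∩ C) / MC G C
    rw [FC_inter]
  w_submodular := by
    intro C hC A B
    have hM := (Finset.mem_filter.1 hC).2
    have h := FC_submod G C A B
    show FC G C (A ∪ B) / MC G C + FC G C (A ∩ B) / MC G C
        ≤ FC G C A / MC G C + FC G C B / MC G C
    rw [← add_div, ← add_div]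
    exact (div_le_div_iff_of_pos_right hM).2 h
  w_nonneg := fun C hC S => div_nonneg (FC_nonneg G C S) (MC_nonneg G C)
  w_le_one := by
    intro C hC S
    have hM := (Finset.mem_filter.1 hC).2
    show FC G C S / MC G C ≤ 1
    exact (div_le_one hM).2 (FC_le_MC G C S)
  w_empty := fun C hC => by
    show FC G C ∅ / MC G C = 0
    rw [FC_empty, zero_div]
  w_normalized := by
    intro C hC
    have hM := (Finset.mem_filter.1 hC).2
    obtain ⟨S, hS⟩ := exists_FC_eq_MC G C
    refine ⟨S ∩ C, Finset.inter_subset_right, ?_⟩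
    show FC G C (S ∩ C) / MC G C = 1
    rw [FC_inter, hS, div_self hM.ne']
  w_symm := by
    intro C hC S hS
    have hCc := (Finset.mem_filter.1 hC).1
    show FC G C S / MC G C = FC G C (C \ S) / MC G C
    rw [FC_symm G hCc hS]

lemma reduced_volB (S : Finset (Fin N)) : (reduced G).volB S = G.volB S := by
  unfold SubmodularHypergraph.volB reduced
  simp only
  have h1 : ∑ C ∈ (comps G).filter (fun C => 0 < MC G C), MC G C * (FC G C S / MC G C)
      = ∑ C ∈ (comps G).filter (fun C => 0 < MC G C), FC G C S := by
    refine Finset.sum_congr rfl fun C hC => ?_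
    have hM := (Finset.mem_filter.1 hC).2
    field_simp
  rw [h1]
  have h2 : ∑ C ∈ (comps G).filter (fun C => 0 < MC G C), FC G C S
      = ∑ C ∈ comps G, FC G C S := by
    refine Finset.sum_subset (Finset.filter_subset _ _) fun C hC hC' => ?_
    have hM : ¬ 0 < MC G C := fun h => hC' (Finset.mem_filter.2 ⟨hC, h⟩)
    exact FC_eq_zero_of_MC G (le_antisymm (not_lt.1 hM) (MC_nonneg G C)) S
  rw [h2]
  unfold FC
  rw [Finset.sum_comm]
  refine Finset.sum_congr rfl fun e he => ?_
  rw [← Finset.mul_sum, ← w_comps_sum G he]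

end StmtFour

end StmtFourAux

/-- Every submodular hypergraph can be reduced to one on the same vertex
set with the same vertex weights, with identical boundary volumes `vol(∂S)` for every
`S ⊆ V`, and in which any two distinct vertices of a common hyperedge are connected. -/
theorem stmt4 {N : ℕ} (G : SubmodularHypergraph N) :
    ∃ G' : SubmodularHypergraph N,
      G'.μ = G.μ ∧
      (∀ S : Finset (Fin N), G'.volB S = G.volB S) ∧
      (∀ e ∈ G'.E, ∀ u ∈ e, ∀ v ∈ e, u ≠ v → G'.VertConnected u v) := by
  refine ⟨StmtFour.reduced G, rfl, StmtFour.reduced_volB G, ?_⟩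
  intro C hC u hu v hv huv
  have hCc : C ∈ StmtFour.comps G := (Finset.mem_filter.1 hC).1
  obtain ⟨z, -, rfl⟩ := Finset.mem_image.1 hCc
  have hru := (StmtFour.mem_comp G).1 hu
  have hrv := (StmtFour.mem_comp G).1 hv
  have hrel : StmtFour.rel G u v := StmtFour.rel_trans G (StmtFour.rel_symm G hru) hrv
  have hvc : G.VertConnected u v := hrel.resolve_left huv
  intro S hS1 hS2
  rw [StmtFour.reduced_volB G]
  exact hvc S hS1 hS2
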